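/- arXiv:1604.07651 — 4 statements merged into one kernel-verified Lean document; each statement's English description precedes it below -/
import Mathlib

section
/- Let θ, θ' ∈ (−π/2, π/2) and ρ, ρ' ∈ ℝ, and set (s,y) = (e^{ρ'} cos θ', e^{ρ'} sin θ') (log-polar coordinates). Then the incidence relation s·cos θ + y·sin θ = e^ρ holds if and only if cos(θ − θ') = e^{ρ − ρ'}. Moreover, if cos θ ≠ 0 and one sets τ² = e^ρ / cos θ and q² = −tan θ, then s·cos θ + y·sin θ = e^ρ is equivalent to s = τ² + q² y; that is, the straight line s = τ² + q² y in the (s,y)-plane corresponds in log-polar coordinates (θ',ρ') exactly to the shift-invariant curve cos(θ − θ') = e^{ρ − ρ'}. -/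
open Real

/-- In log-polar coordinates `(s,y) = (e^{ρ'} cos θ', e^{ρ'} sin θ')`, the incidence
relation `s cos θ + y sin θ = e^ρ` is equivalent to `cos (θ - θ') = e^{ρ - ρ'}`, and,
with `τ² = e^ρ / cos θ`, `q² = -tan θ`, it is equivalent to `s = τ² + q² y`. -/
theorem logpolar_line_incidence (θ θ' ρ ρ' : ℝ)
    (hθ : θ ∈ Set.Ioo (-(π / 2)) (π / 2)) (hθ' : θ' ∈ Set.Ioo (-(π / 2)) (π / 2))
    (s y : ℝ) (hs : s = Real.exp ρ' * Real.cos θ') (hy : y = Real.exp ρ' * Real.sin θ') :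
    (s * Real.cos θ + y * Real.sin θ = Real.exp ρ ↔
      Real.cos (θ - θ') = Real.exp (ρ - ρ')) ∧
    (Real.cos θ ≠ 0 →
      ∀ τsq qsq : ℝ, τsq = Real.exp ρ / Real.cos θ → qsq = -Real.tan θ →
        (s * Real.cos θ + y * Real.sin θ = Real.exp ρ ↔ s = τsq + qsq * y)) := by
  have key : s * Real.cos θ + y * Real.sin θ = Real.exp ρ' * Real.cos (θ - θ') := by
    rw [hs, hy, Real.cos_sub]; ring
  constructor
  · rw [key, Real.exp_sub]
    rw [eq_div_iff (Real.exp_ne_zero ρ'), mul_comm]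
  · intro hc τsq qsq hτ hq
    rw [hτ, hq, Real.tan_eq_sin_div_cos]
    field_simp
    constructor <;> intro h <;> linarith
end

section
/- Let K : ℝ^N → ℝ^M be a linear map, f ∈ ℝ^M, μ > 0, and c > 0 with c‖K‖ < 1 (operator norm with respect to Euclidean norms). Then g* ∈ ℝ^N is a minimizer of the functional F(g) = ‖K g − f‖₂² + μ‖g‖₁ (where ‖g‖₁ = Σ_i |g_i|) if and only if g* is a fixed point of the iteration map, i.e., g* = 𝐒_{c²μ}(g* + c² K^T (f − K g*)), where 𝐒_λ denotes componentwise soft-thresholding with parameter λ. -/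
open Real
open scoped RealInnerProductSpace

/-- The soft-thresholding function with parameter `μ`. -/
noncomputable def softThreshold (μ v : ℝ) : ℝ :=
  if v ≤ -μ / 2 then v + μ / 2 else if v < μ / 2 then 0 else v - μ / 2

lemma soft_fixed (lam y v : ℝ) (hl : 0 < lam) :
    y = softThreshold lam (y + v) ↔
      ((0 < y → v = lam / 2) ∧ (y < 0 → v = -lam / 2) ∧ (y = 0 → |v| ≤ lam / 2)) := by
  unfold softThreshold
  rw [abs_le]
  split_ifs with h1 h2
  · constructor
    · intro h
      have hv : v = -lam/2 := by linarith
      exact ⟨fun hy => by linarith, fun _ => hv, fun hy => ⟨by linarith, by linarith⟩⟩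
    · rintro ⟨hp, hn, hz⟩
      rcases lt_trichotomy y 0 with hy|hy|hy
      · have := hn hy; linarith
      · have := hz hy; linarith [this.1, this.2]
      · have := hp hy; linarith
  · constructor
    · intro h
      have hy : y = 0 := by linarith
      exact ⟨fun h' => by linarith, fun h' => by linarith,
        fun _ => ⟨by linarith, by linarith⟩⟩
    · rintro ⟨hp, hn, hz⟩
      rcases lt_trichotomy y 0 with hy|hy|hy
      · have := hn hy; linarith
      · linarith
      · have := hp hy; linarith
  · push_neg at h1 h2
    constructor
    · intro h
      have hv : v = lam/2 := by linarith
      exact ⟨fun _ => hv, fun hy => by linarith, fun hy => ⟨by linarith, by linarith⟩⟩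
    · rintro ⟨hp, hn, hz⟩
      rcases lt_trichotomy y 0 with hy|hy|hy
      · have := hn hy; linarith
      · have := hz hy; linarith [this.1, this.2]
      · have := hp hy; linarith

lemma quad_nonneg (A B δ : ℝ) (hA : 0 ≤ A) (hδ : 0 < δ)
    (h : ∀ t, 0 < t → t < δ → 0 ≤ A * t ^ 2 + B * t) : 0 ≤ B := by
  by_contra hB
  push_neg at hB
  have hA1 : (0:ℝ) < A + 1 := by linarith
  set t := min (δ / 2) (-B / (A + 1)) with ht
  have htp : 0 < t := lt_min (by linarith) (div_pos (by linarith) (by linarith))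
  have htδ : t < δ := lt_of_le_of_lt (min_le_left _ _) (by linarith)
  have ht3 : t ≤ -B / (A + 1) := min_le_right _ _
  have h4 : t * (A + 1) ≤ -B := (le_div_iff₀ hA1).mp ht3
  have h5 := h t htp htδ
  nlinarith [mul_le_mul_of_nonneg_left h4 htp.le, mul_pos htp htp]

lemma pt_ineq (μ u y x : ℝ) (hμ : 0 < μ) (h1 : 0 < y → u = μ / 2)
    (h2 : y < 0 → u = -μ / 2) (h3 : y = 0 → |u| ≤ μ / 2) :
    0 ≤ μ * |x| - μ * |y| - 2 * u * (x - y) := by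
  rcases lt_trichotomy y 0 with hy|hy|hy
  · have := h2 hy
    rw [abs_of_neg hy]
    nlinarith [le_abs_self x, neg_abs_le x]
  · have := abs_le.mp (h3 hy)
    rw [hy, abs_zero]
    nlinarith [le_abs_self x, neg_abs_le x, abs_nonneg x]
  · have := h1 hy
    rw [abs_of_pos hy]
    nlinarith [le_abs_self x, neg_abs_le x]


set_option maxHeartbeats 1000000 in
/-- `g₀` minimizes `‖K g - f‖² + μ ‖g‖₁` if and only if `g₀` is a fixed point of the
soft-thresholding iteration map `g ↦ 𝐒_{c²μ}(g + c² Kᵀ (f - K g))`. -/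
theorem minimizer_iff_fixed_point (N M : ℕ)
    (K : EuclideanSpace ℝ (Fin N) →L[ℝ] EuclideanSpace ℝ (Fin M))
    (f : EuclideanSpace ℝ (Fin M)) (μ c : ℝ) (hμ : 0 < μ) (hc : 0 < c)
    (hK : c * ‖K‖ < 1) (g₀ : EuclideanSpace ℝ (Fin N)) :
    (∀ g : EuclideanSpace ℝ (Fin N),
        ‖K g₀ - f‖ ^ 2 + μ * ∑ i, |g₀ i| ≤ ‖K g - f‖ ^ 2 + μ * ∑ i, |g i|) ↔
      g₀ = (show EuclideanSpace ℝ (Fin N) from WithLp.toLp 2 fun i =>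
        softThreshold (c ^ 2 * μ)
          ((g₀ + c ^ 2 • (ContinuousLinearMap.adjoint K) (f - K g₀)) i)) := by
  have hc2 : (0:ℝ) < c ^ 2 := by positivity
  set u : EuclideanSpace ℝ (Fin N) := (ContinuousLinearMap.adjoint K) (f - K g₀) with hu
  -- the fixed-point condition is equivalent to the componentwise KKT conditions
  have hRHS : (g₀ = (show EuclideanSpace ℝ (Fin N) from WithLp.toLp 2 fun i =>
        softThreshold (c ^ 2 * μ) ((g₀ + c ^ 2 • u) i))) ↔
      ∀ i, (0 < g₀ i → u i = μ / 2) ∧ (g₀ i < 0 → u i = -μ / 2) ∧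
        (g₀ i = 0 → |u i| ≤ μ / 2) := by
    rw [WithLp.ext_iff, funext_iff]
    apply forall_congr'
    intro i
    show g₀ i = softThreshold (c ^ 2 * μ) ((g₀ + c ^ 2 • u) i) ↔ _
    have happ : (g₀ + c ^ 2 • u) i = g₀ i + c ^ 2 * u i := by simp
    rw [happ, soft_fixed _ _ _ (by positivity)]
    constructor
    · rintro ⟨hp, hn, hz⟩
      refine ⟨fun hy => ?_, fun hy => ?_, fun hy => ?_⟩
      · exact mul_left_cancel₀ hc2.ne' ((hp hy).trans (by ring))
      · exact mul_left_cancel₀ hc2.ne' ((hn hy).trans (by ring))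
      · have h5 := hz hy
        rw [abs_mul, abs_of_pos hc2] at h5
        exact (mul_le_mul_iff_right₀ hc2).mp (h5.trans_eq (by ring))
    · rintro ⟨hp, hn, hz⟩
      refine ⟨fun hy => by rw [hp hy]; ring, fun hy => by rw [hn hy]; ring, fun hy => ?_⟩
      rw [abs_mul, abs_of_pos hc2]
      nlinarith [hz hy, abs_nonneg (u i)]
  rw [hRHS]
  -- adjoint identity
  have hadj : (ContinuousLinearMap.adjoint K) (K g₀ - f) = -u := by
    rw [hu, ← map_neg, neg_sub]
  constructor
  · -- minimizer → KKT
    intro h i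
    set e : EuclideanSpace ℝ (Fin N) := EuclideanSpace.single i (1:ℝ) with he
    set A : ℝ := ‖K e‖ ^ 2 with hA
    have hA0 : 0 ≤ A := by positivity
    have key : ∀ t : ℝ, 0 ≤ A * t ^ 2 - 2 * u i * t + μ * (|g₀ i + t| - |g₀ i|) := by
      intro t
      have hg := h (g₀ + t • e)
      have hnorm : ‖K (g₀ + t • e) - f‖ ^ 2
          = ‖K g₀ - f‖ ^ 2 - 2 * u i * t + A * t ^ 2 := by
        have h1 : K (g₀ + t • e) - f = (K g₀ - f) + t • K e := by
          rw [map_add, map_smul]; abel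
        have h2 : ⟪K g₀ - f, K e⟫ = -(u i) := by
          rw [← ContinuousLinearMap.adjoint_inner_left, hadj]
          simp [he, EuclideanSpace.inner_single_right]
        rw [h1, norm_add_sq_real, real_inner_smul_right, h2, norm_smul, hA]
        simp [mul_pow]
        ring
      have hsum : ∑ j, |(g₀ + t • e) j| = (∑ j, |g₀ j|) + (|g₀ i + t| - |g₀ i|) := by
        have hptw : ∀ j : Fin N, |(g₀ + t • e) j|
            = |g₀ j| + (if j = i then |g₀ i + t| - |g₀ i| else 0) := by
          intro j
          by_cases hj : j = i
          · subst hj; simp [he, EuclideanSpace.single_apply]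
          · simp [he, EuclideanSpace.single_apply, hj]
        rw [Finset.sum_congr rfl (fun j _ => hptw j), Finset.sum_add_distrib,
          Finset.sum_ite_eq' Finset.univ i]
        simp
      rw [hnorm, hsum] at hg
      nlinarith [hg]
    rcases lt_trichotomy (g₀ i) 0 with hy|hy|hy
    · refine ⟨fun h' => absurd h' (not_lt.mpr hy.le), fun _ => ?_, fun h' => absurd h' hy.ne⟩
      have hp : 0 ≤ -2 * u i - μ := by
        refine quad_nonneg A _ (-(g₀ i)) hA0 (by linarith) (fun t ht0 ht1 => ?_)
        have hk := key t
        rw [abs_of_neg hy, abs_of_neg (by linarith : g₀ i + t < 0)] at hk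
        nlinarith [hk]
      have hm : 0 ≤ 2 * u i + μ := by
        refine quad_nonneg A _ 1 hA0 one_pos (fun s hs0 hs1 => ?_)
        have hk := key (-s)
        rw [abs_of_neg hy, abs_of_neg (by linarith : g₀ i + -s < 0)] at hk
        nlinarith [hk]
      linarith
    · refine ⟨fun h' => absurd h' (by rw [hy]; exact lt_irrefl 0),
        fun h' => absurd h' (by rw [hy]; exact lt_irrefl 0), fun _ => ?_⟩
      have hp : 0 ≤ μ - 2 * u i := by
        refine quad_nonneg A _ 1 hA0 one_pos (fun t ht0 ht1 => ?_)
        have hk := key t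
        rw [hy] at hk
        rw [abs_zero] at hk
        rw [zero_add, abs_of_pos ht0] at hk
        nlinarith [hk]
      have hm : 0 ≤ μ + 2 * u i := by
        refine quad_nonneg A _ 1 hA0 one_pos (fun s hs0 hs1 => ?_)
        have hk := key (-s)
        rw [hy] at hk
        rw [abs_zero] at hk
        rw [zero_add, abs_of_neg (by linarith : -s < 0)] at hk
        nlinarith [hk]
      rw [abs_le]
      constructor <;> linarith
    · refine ⟨fun _ => ?_, fun h' => absurd h' (not_lt.mpr hy.le), fun h' => absurd h' hy.ne'⟩
      have hp : 0 ≤ μ - 2 * u i := by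
        refine quad_nonneg A _ 1 hA0 one_pos (fun t ht0 ht1 => ?_)
        have hk := key t
        rw [abs_of_pos hy, abs_of_pos (by linarith : 0 < g₀ i + t)] at hk
        nlinarith [hk]
      have hm : 0 ≤ 2 * u i - μ := by
        refine quad_nonneg A _ (g₀ i) hA0 hy (fun s hs0 hs1 => ?_)
        have hk := key (-s)
        rw [abs_of_pos hy, abs_of_pos (by linarith : 0 < g₀ i + -s)] at hk
        nlinarith [hk]
      linarith
  · -- KKT → minimizer
    intro hKKT g
    have hnorm : ‖K g - f‖ ^ 2 = ‖K g₀ - f‖ ^ 2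
        - 2 * ∑ i, u i * (g i - g₀ i) + ‖K (g - g₀)‖ ^ 2 := by
      have h1 : K g - f = (K g₀ - f) + K (g - g₀) := by
        rw [map_sub]; abel
      have h2 : ⟪K g₀ - f, K (g - g₀)⟫ = -∑ i, u i * (g i - g₀ i) := by
        rw [← ContinuousLinearMap.adjoint_inner_left, hadj]
        simp [PiLp.inner_apply, RCLike.inner_apply, Finset.sum_neg_distrib]
        exact Finset.sum_congr rfl fun i _ => mul_comm _ _
      rw [h1, norm_add_sq_real, h2]
      ring
    have hpt : 0 ≤ ∑ i, (μ * |g i| - μ * |g₀ i| - 2 * u i * (g i - g₀ i)) :=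
      Finset.sum_nonneg fun i _ =>
        pt_ineq μ (u i) (g₀ i) (g i) hμ (hKKT i).1 (hKKT i).2.1 (hKKT i).2.2
    have hsplit : ∑ i, (μ * |g i| - μ * |g₀ i| - 2 * u i * (g i - g₀ i))
        = μ * (∑ i, |g i|) - μ * (∑ i, |g₀ i|) - 2 * ∑ i, u i * (g i - g₀ i) := by
      have hterm : ∀ j : Fin N, μ * |g j| - μ * |g₀ j| - 2 * u j * (g j - g₀ j)
          = μ * |g j| - μ * |g₀ j| - 2 * (u j * (g j - g₀ j)) := fun j => by ring
      simp_rw [hterm]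
      rw [Finset.sum_sub_distrib, Finset.sum_sub_distrib, ← Finset.mul_sum, ← Finset.mul_sum,
        ← Finset.mul_sum]
    rw [hsplit] at hpt
    have hKd : 0 ≤ ‖K (g - g₀)‖ ^ 2 := by positivity
    linarith [hnorm, hpt, hKd]
end

section
/- Let K : ℝ^N → ℝ^M be a linear map, f ∈ ℝ^M, μ > 0, and c > 0 with c‖K‖ < 1 (operator norm with respect to Euclidean norms). For any initial guess g⁰ ∈ ℝ^N, the iterates defined by gⁿ = 𝐒_{c²μ}(g^{n−1} + c² K^T (f − K g^{n−1})), n = 1, 2, …, where 𝐒_λ is componentwise soft-thresholding with parameter λ, converge to a minimizer of the functional F(g) = ‖K g − f‖₂² + μ‖g‖₁, where ‖g‖₁ = Σ_i |g_i|. -/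
set_option maxHeartbeats 800000

open Real
open scoped RealInnerProductSpace

lemma softThreshold_eq_clamp {l : ℝ} (hl : 0 ≤ l) (v : ℝ) :
    softThreshold l v = v - max (-(l/2)) (min (l/2) v) := by
  unfold softThreshold
  split_ifs with h1 h2
  · rw [min_eq_right (by linarith), max_eq_left (by linarith)]; ring
  · rw [min_eq_right (by linarith), max_eq_right (by linarith)]; ring
  · rw [min_eq_left (by linarith), max_eq_right (by linarith)]

lemma soft_aux {l : ℝ} (hl : 0 ≤ l) (v : ℝ) :
    |v - softThreshold l v| ≤ l/2 ∧
      (v - softThreshold l v) * softThreshold l v = l/2 * |softThreshold l v| := by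
  unfold softThreshold
  split_ifs with h1 h2
  · exact ⟨by rw [abs_le]; constructor <;> linarith,
      by rw [abs_of_nonpos (by linarith)]; ring⟩
  · exact ⟨by rw [abs_le]; constructor <;> linarith, by simp⟩
  · exact ⟨by rw [abs_le]; constructor <;> linarith,
      by rw [abs_of_nonneg (by linarith)]; ring⟩

lemma soft_key {l : ℝ} (hl : 0 ≤ l) (v z : ℝ) :
    l/2 * |softThreshold l v| + (1/2)*(softThreshold l v - v)^2
      + (1/2)*(z - softThreshold l v)^2 ≤ l/2 * |z| + (1/2)*(z - v)^2 := by
  obtain ⟨h1, h2⟩ := soft_aux hl v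
  set w := softThreshold l v with hw
  have h3 : (v - w) * z ≤ l/2 * |z| := by
    calc (v - w) * z ≤ |(v - w) * z| := le_abs_self _
    _ = |v - w| * |z| := abs_mul _ _
    _ ≤ l/2 * |z| := mul_le_mul_of_nonneg_right h1 (abs_nonneg z)
  nlinarith [h2, h3]

lemma soft_lip {l : ℝ} (hl : 0 ≤ l) (v w : ℝ) :
    |softThreshold l v - softThreshold l w| ≤ |v - w| := by
  unfold softThreshold
  split_ifs <;> (rw [abs_le]; constructor <;>
    linarith [le_abs_self (v-w), neg_abs_le (v-w)])

lemma softThreshold_continuous {l : ℝ} (hl : 0 ≤ l) : Continuous (softThreshold l) := by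
  have : softThreshold l = fun v => v - max (-(l/2)) (min (l/2) v) :=
    funext fun v => softThreshold_eq_clamp hl v
  rw [this]
  exact continuous_id.sub (continuous_const.max (continuous_const.min continuous_id))

lemma esum_sq {n : ℕ} (x : EuclideanSpace ℝ (Fin n)) : ‖x‖^2 = ∑ i, (x i)^2 := by
  rw [EuclideanSpace.norm_eq, Real.sq_sqrt (by positivity)]
  simp [sq_abs]

lemma enorm_le_sum_abs {n : ℕ} (x : EuclideanSpace ℝ (Fin n)) : ‖x‖ ≤ ∑ i, |x i| := by
  have h2 : (0:ℝ) ≤ ∑ i, |x i| := Finset.sum_nonneg fun i _ => abs_nonneg _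
  have h1 : ‖x‖^2 ≤ (∑ i, |x i|)^2 := by
    rw [esum_sq]
    calc ∑ i, (x i)^2 = ∑ i, |x i|^2 := by simp [sq_abs]
    _ ≤ (∑ i, |x i|)^2 := Finset.sum_sq_le_sq_sum_of_nonneg fun i _ => abs_nonneg _
  nlinarith [norm_nonneg x]

lemma prox_ineq {n : ℕ} {l : ℝ} (hl : 0 ≤ l) (V G Z : EuclideanSpace ℝ (Fin n))
    (hG : ∀ i, G i = softThreshold l (V i)) :
    l/2 * ∑ i, |G i| + (1/2) * ‖G - V‖^2 + (1/2) * ‖Z - G‖^2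
      ≤ l/2 * ∑ i, |Z i| + (1/2) * ‖Z - V‖^2 := by
  have key : ∀ i : Fin n,
      l/2 * |G i| + (1/2)*(G i - V i)^2 + (1/2)*(Z i - G i)^2
        ≤ l/2 * |Z i| + (1/2)*(Z i - V i)^2 := by
    intro i; rw [hG i]; exact soft_key hl (V i) (Z i)
  have hsum := Finset.sum_le_sum (fun i (_ : i ∈ Finset.univ) => key i)
  simp only [Finset.sum_add_distrib, ← Finset.mul_sum] at hsum
  rw [esum_sq (G - V), esum_sq (Z - G), esum_sq (Z - V)]
  simp only [PiLp.sub_apply] at *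
  linarith

/-- The ISTA iteration map. -/
noncomputable def istaT (N M : ℕ)
    (K : EuclideanSpace ℝ (Fin N) →L[ℝ] EuclideanSpace ℝ (Fin M))
    (f : EuclideanSpace ℝ (Fin M)) (μ c : ℝ) :
    EuclideanSpace ℝ (Fin N) → EuclideanSpace ℝ (Fin N) :=
  fun x => (show EuclideanSpace ℝ (Fin N) from WithLp.toLp 2 (fun i =>
    softThreshold (c ^ 2 * μ)
      ((x + c ^ 2 • (ContinuousLinearMap.adjoint K) (f - K x)) i)))

/-- The ISTA objective. -/
noncomputable def istaPhi (N M : ℕ)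
    (K : EuclideanSpace ℝ (Fin N) →L[ℝ] EuclideanSpace ℝ (Fin M))
    (f : EuclideanSpace ℝ (Fin M)) (μ : ℝ) : EuclideanSpace ℝ (Fin N) → ℝ :=
  fun x => ‖K x - f‖ ^ 2 + μ * ∑ i, |x i|

section ista

variable {N M : ℕ} (K : EuclideanSpace ℝ (Fin N) →L[ℝ] EuclideanSpace ℝ (Fin M))
  (f : EuclideanSpace ℝ (Fin M)) (μ c : ℝ)

lemma istaT_apply (x : EuclideanSpace ℝ (Fin N)) (i : Fin N) :
    istaT N M K f μ c x i = softThreshold (c ^ 2 * μ)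
      ((x + c ^ 2 • (ContinuousLinearMap.adjoint K) (f - K x)) i) := rfl

lemma istaT_sub_V (x : EuclideanSpace ℝ (Fin N)) :
    x - (x + c ^ 2 • (ContinuousLinearMap.adjoint K) (f - K x))
      = c ^ 2 • (ContinuousLinearMap.adjoint K) (K x - f) := by
  have hAneg : (ContinuousLinearMap.adjoint K) (f - K x)
      = -((ContinuousLinearMap.adjoint K) (K x - f)) := by
    rw [← map_neg]; congr 1; abel
  rw [hAneg, smul_neg]; abel

lemma ista_descent (hμ : 0 < μ) (hc : 0 < c) (hK : c * ‖K‖ < 1)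
    (x : EuclideanSpace ℝ (Fin N)) :
    c ^ 2 * istaPhi N M K f μ (istaT N M K f μ c x) + ‖istaT N M K f μ c x - x‖ ^ 2
      ≤ c ^ 2 * istaPhi N M K f μ x := by
  have hc2 : (0:ℝ) < c ^ 2 := by positivity
  have hl : 0 ≤ c ^ 2 * μ := by positivity
  have h0 : 0 ≤ c * ‖K‖ := mul_nonneg hc.le (norm_nonneg K)
  have hKc : c ^ 2 * ‖K‖ ^ 2 ≤ 1 := by nlinarith only [mul_le_mul hK.le hK.le h0 zero_le_one]
  obtain ⟨V, hV⟩ : ∃ V, V = x + c ^ 2 • (ContinuousLinearMap.adjoint K) (f - K x) := ⟨_, rfl⟩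
  obtain ⟨Tx, hTx⟩ : ∃ Tx, Tx = istaT N M K f μ c x := ⟨_, rfl⟩
  obtain ⟨u, hu⟩ : ∃ u, u = (ContinuousLinearMap.adjoint K) (K x - f) := ⟨_, rfl⟩
  obtain ⟨d, hd⟩ : ∃ d, d = Tx - x := ⟨_, rfl⟩
  have hprox := prox_ineq hl V Tx x (by
    intro i
    rw [hTx, hV]
    exact istaT_apply K f μ c x i)
  have e2 : x - V = c ^ 2 • u := by rw [hV, hu]; exact istaT_sub_V K f c x
  have e1 : Tx - V = d + c ^ 2 • u := by
    have h : Tx - V = (Tx - x) + (x - V) := by abel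
    rw [h, e2, ← hd]
  have hinner : ⟪d, u⟫ = ⟪K d, K x - f⟫ := by
    rw [hu]; exact ContinuousLinearMap.adjoint_inner_right K d (K x - f)
  have expand1 : ‖d + c ^ 2 • u‖ ^ 2
      = ‖d‖ ^ 2 + 2 * (c ^ 2 * ⟪K d, K x - f⟫) + c ^ 4 * ‖u‖ ^ 2 := by
    rw [norm_add_sq_real, real_inner_smul_right, hinner, norm_smul, Real.norm_eq_abs,
      abs_of_nonneg hc2.le, mul_pow]
    ring
  have expand2 : ‖c ^ 2 • u‖ ^ 2 = c ^ 4 * ‖u‖ ^ 2 := by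
    rw [norm_smul, Real.norm_eq_abs, abs_of_nonneg hc2.le, mul_pow]; ring
  have hxT : ‖x - Tx‖ = ‖d‖ := by rw [hd, norm_sub_rev]
  rw [e1, e2, hxT, expand1, expand2] at hprox
  have hq : ‖K Tx - f‖ ^ 2 = ‖K x - f‖ ^ 2 + 2 * ⟪K x - f, K d⟫ + ‖K d‖ ^ 2 := by
    have hKTx : K Tx - f = (K x - f) + K d := by
      rw [hd, map_sub]; abel
    rw [hKTx, norm_add_sq_real]
  have hKd : ‖K d‖ ^ 2 ≤ ‖K‖ ^ 2 * ‖d‖ ^ 2 := by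
    have := K.le_opNorm d
    nlinarith only [this, norm_nonneg (K d), norm_nonneg d, norm_nonneg K]
  have h5 : c ^ 2 * ‖K d‖ ^ 2 ≤ ‖d‖ ^ 2 := by
    have h6 : c ^ 2 * ‖K d‖ ^ 2 ≤ c ^ 2 * (‖K‖ ^ 2 * ‖d‖ ^ 2) :=
      mul_le_mul_of_nonneg_left hKd hc2.le
    have h7 : c ^ 2 * ‖K‖ ^ 2 * ‖d‖ ^ 2 ≤ 1 * ‖d‖ ^ 2 :=
      mul_le_mul_of_nonneg_right hKc (sq_nonneg _)
    nlinarith only [h6, h7, sq_nonneg c]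
  have hcomm : ⟪K x - f, K d⟫ = ⟪K d, K x - f⟫ := real_inner_comm _ _
  have hdn : ‖istaT N M K f μ c x - x‖ = ‖d‖ := by rw [hd, hTx]
  simp only [istaPhi, ← hTx]
  rw [hq, hcomm, ← hd]
  nlinarith only [hprox, h5]


lemma ista_nonexpansive (hc : 0 < c) (hK : c * ‖K‖ < 1)
    (hμ : 0 ≤ μ) (x y : EuclideanSpace ℝ (Fin N)) :
    ‖istaT N M K f μ c x - istaT N M K f μ c y‖ ≤ ‖x - y‖ := by
  have hc2 : (0:ℝ) < c ^ 2 := by positivity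
  have hl : 0 ≤ c ^ 2 * μ := by positivity
  have h0 : 0 ≤ c * ‖K‖ := mul_nonneg hc.le (norm_nonneg K)
  have hKc : c ^ 2 * ‖K‖ ^ 2 ≤ 1 := by nlinarith only [mul_le_mul hK.le hK.le h0 zero_le_one]
  obtain ⟨Vx, hVx⟩ : ∃ V, V = x + c ^ 2 • (ContinuousLinearMap.adjoint K) (f - K x) := ⟨_, rfl⟩
  obtain ⟨Vy, hVy⟩ : ∃ V, V = y + c ^ 2 • (ContinuousLinearMap.adjoint K) (f - K y) := ⟨_, rfl⟩
  obtain ⟨e, he⟩ : ∃ e, e = x - y := ⟨_, rfl⟩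
  have hVsub : Vx - Vy = e - c ^ 2 • (ContinuousLinearMap.adjoint K) (K e) := by
    rw [hVx, hVy, he, map_sub (ContinuousLinearMap.adjoint K) f (K x),
      map_sub (ContinuousLinearMap.adjoint K) f (K y), smul_sub, smul_sub,
      map_sub K x y, map_sub (ContinuousLinearMap.adjoint K) (K x) (K y), smul_sub]
    abel
  have hsq1 : ‖istaT N M K f μ c x - istaT N M K f μ c y‖ ^ 2 ≤ ‖Vx - Vy‖ ^ 2 := by
    rw [esum_sq, esum_sq]
    apply Finset.sum_le_sum
    intro i _
    simp only [PiLp.sub_apply, istaT_apply, ← hVx, ← hVy]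
    calc (softThreshold (c^2*μ) (Vx i) - softThreshold (c^2*μ) (Vy i))^2
        = |softThreshold (c^2*μ) (Vx i) - softThreshold (c^2*μ) (Vy i)|^2 := (sq_abs _).symm
      _ ≤ |Vx i - Vy i|^2 :=
          pow_le_pow_left₀ (abs_nonneg _) (soft_lip hl (Vx i) (Vy i)) 2
      _ = (Vx i - Vy i)^2 := sq_abs _
  have hsq2 : ‖Vx - Vy‖ ^ 2 ≤ ‖e‖ ^ 2 := by
    rw [hVsub, norm_sub_sq_real, real_inner_smul_right]
    have hip : ⟪e, (ContinuousLinearMap.adjoint K) (K e)⟫ = ‖K e‖ ^ 2 := by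
      rw [ContinuousLinearMap.adjoint_inner_right, real_inner_self_eq_norm_sq]
    have hAe : ‖(ContinuousLinearMap.adjoint K) (K e)‖ ≤ ‖K‖ * ‖K e‖ := by
      have h1 := (ContinuousLinearMap.adjoint K).le_opNorm (K e)
      have h2 : ‖ContinuousLinearMap.adjoint K‖ = ‖K‖ :=
        (ContinuousLinearMap.adjoint : _ ≃ₗᵢ⋆[ℝ] _).norm_map K
      rw [h2] at h1; exact h1
    have hAe2 : ‖(ContinuousLinearMap.adjoint K) (K e)‖ ^ 2 ≤ ‖K‖ ^ 2 * ‖K e‖ ^ 2 := by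
      nlinarith only [hAe, norm_nonneg ((ContinuousLinearMap.adjoint K) (K e)), norm_nonneg (K e),
        norm_nonneg K]
    have hsm : ‖c ^ 2 • (ContinuousLinearMap.adjoint K) (K e)‖ ^ 2
        = c ^ 4 * ‖(ContinuousLinearMap.adjoint K) (K e)‖ ^ 2 := by
      rw [norm_smul, Real.norm_eq_abs, abs_of_nonneg hc2.le, mul_pow]; ring
    rw [hip, hsm]
    nlinarith only [mul_le_mul_of_nonneg_left hAe2 (by positivity : (0:ℝ) ≤ c ^ 4),
      mul_le_mul_of_nonneg_right hKc (mul_nonneg hc2.le (sq_nonneg ‖K e‖)),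
      mul_nonneg hc2.le (sq_nonneg ‖K e‖)]
  have h1 : ‖istaT N M K f μ c x - istaT N M K f μ c y‖ ^ 2 ≤ ‖x - y‖ ^ 2 := by
    rw [← he]; linarith
  exact (pow_le_pow_iff_left₀ (norm_nonneg _) (norm_nonneg _) two_ne_zero).mp h1

lemma ista_fixed_min (hμ : 0 < μ) (hc : 0 < c)
    (x : EuclideanSpace ℝ (Fin N)) (hx : istaT N M K f μ c x = x)
    (h : EuclideanSpace ℝ (Fin N)) :
    istaPhi N M K f μ x ≤ istaPhi N M K f μ h := by
  have hc2 : (0:ℝ) < c ^ 2 := by positivity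
  have hl : 0 ≤ c ^ 2 * μ := by positivity
  obtain ⟨V, hV⟩ : ∃ V, V = x + c ^ 2 • (ContinuousLinearMap.adjoint K) (f - K x) := ⟨_, rfl⟩
  obtain ⟨u, hu⟩ : ∃ u, u = (ContinuousLinearMap.adjoint K) (K x - f) := ⟨_, rfl⟩
  have hprox := prox_ineq hl V x h (by
    intro i
    conv_lhs => rw [← hx]
    rw [hV]
    exact istaT_apply K f μ c x i)
  have e2 : x - V = c ^ 2 • u := by rw [hV, hu]; exact istaT_sub_V K f c x
  have e3 : h - V = (h - x) + c ^ 2 • u := by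
    have h' : h - V = (h - x) + (x - V) := by abel
    rw [h', e2]
  have hinner : ⟪h - x, u⟫ = ⟪K (h - x), K x - f⟫ := by
    rw [hu]; exact ContinuousLinearMap.adjoint_inner_right K _ _
  have expand1 : ‖(h - x) + c ^ 2 • u‖ ^ 2
      = ‖h - x‖ ^ 2 + 2 * (c ^ 2 * ⟪K (h - x), K x - f⟫) + c ^ 4 * ‖u‖ ^ 2 := by
    rw [norm_add_sq_real, real_inner_smul_right, hinner, norm_smul, Real.norm_eq_abs,
      abs_of_nonneg hc2.le, mul_pow]
    ring
  have expand2 : ‖c ^ 2 • u‖ ^ 2 = c ^ 4 * ‖u‖ ^ 2 := by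
    rw [norm_smul, Real.norm_eq_abs, abs_of_nonneg hc2.le, mul_pow]; ring
  rw [e2, e3, expand1, expand2] at hprox
  have hq : ‖K h - f‖ ^ 2 = ‖K x - f‖ ^ 2 + 2 * ⟪K x - f, K (h - x)⟫ + ‖K (h - x)‖ ^ 2 := by
    have hKh : K h - f = (K x - f) + K (h - x) := by rw [map_sub]; abel
    rw [hKh, norm_add_sq_real]
  have hcomm : ⟪K x - f, K (h - x)⟫ = ⟪K (h - x), K x - f⟫ := real_inner_comm _ _
  have hgoal : c ^ 2 * istaPhi N M K f μ x ≤ c ^ 2 * istaPhi N M K f μ h := by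
    simp only [istaPhi]
    rw [hq, hcomm]
    nlinarith only [hprox, mul_nonneg hc2.le (sq_nonneg ‖K (h - x)‖)]
  exact (mul_le_mul_iff_right₀ hc2).mp hgoal

lemma ista_continuous (hμ : 0 < μ) (hc : 0 < c) :
    Continuous (istaT N M K f μ c) := by
  have hl : 0 ≤ c ^ 2 * μ := by positivity
  have hV : Continuous fun x : EuclideanSpace ℝ (Fin N) =>
      x + c ^ 2 • (ContinuousLinearMap.adjoint K) (f - K x) := by
    apply continuous_id.add
    exact (((ContinuousLinearMap.adjoint K).continuous.comp
      (continuous_const.sub K.continuous))).const_smul (c ^ 2)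
  refine (PiLp.continuous_toLp 2 (fun _ : Fin N => ℝ)).comp ?_
  apply continuous_pi
  intro i
  exact (softThreshold_continuous hl).comp ((PiLp.continuous_apply 2 _ i).comp hV)

end ista

/-- The iterative soft-thresholding iterates
`gⁿ = 𝐒_{c²μ}(g^{n-1} + c² Kᵀ (f - K g^{n-1}))` converge to a minimizer of
`g ↦ ‖K g - f‖² + μ ‖g‖₁`. -/
theorem soft_thresholding_iteration_converges (N M : ℕ)
    (K : EuclideanSpace ℝ (Fin N) →L[ℝ] EuclideanSpace ℝ (Fin M))
    (f : EuclideanSpace ℝ (Fin M)) (μ c : ℝ) (hμ : 0 < μ) (hc : 0 < c)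
    (hK : c * ‖K‖ < 1) (g : ℕ → EuclideanSpace ℝ (Fin N))
    (hrec : ∀ n : ℕ, g (n + 1) = (show EuclideanSpace ℝ (Fin N) from WithLp.toLp 2 (fun i =>
      softThreshold (c ^ 2 * μ)
        ((g n + c ^ 2 • (ContinuousLinearMap.adjoint K) (f - K (g n))) i)))) :
    ∃ glim : EuclideanSpace ℝ (Fin N),
      Filter.Tendsto g Filter.atTop (nhds glim) ∧
      ∀ h : EuclideanSpace ℝ (Fin N),
        ‖K glim - f‖ ^ 2 + μ * ∑ i, |glim i| ≤ ‖K h - f‖ ^ 2 + μ * ∑ i, |h i| := by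
  have hc2 : (0:ℝ) < c ^ 2 := by positivity
  have hgT : ∀ n, g (n + 1) = istaT N M K f μ c (g n) := fun n => hrec n
  have hPhi_nonneg : ∀ x : EuclideanSpace ℝ (Fin N), 0 ≤ istaPhi N M K f μ x := by
    intro x
    have h1 : (0:ℝ) ≤ ∑ i, |x i| := Finset.sum_nonneg fun i _ => abs_nonneg _
    have h2 : (0:ℝ) ≤ ‖K x - f‖ ^ 2 := sq_nonneg _
    have h3 : (0:ℝ) ≤ μ * ∑ i, |x i| := mul_nonneg hμ.le h1
    simp only [istaPhi]
    linarith only [h2, h3]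
  have hmono : ∀ n, istaPhi N M K f μ (g (n + 1)) ≤ istaPhi N M K f μ (g n) := by
    intro n
    rw [hgT n]
    have h := ista_descent K f μ c hμ hc hK (g n)
    have h2 : c ^ 2 * istaPhi N M K f μ (istaT N M K f μ c (g n))
        ≤ c ^ 2 * istaPhi N M K f μ (g n) := by
      linarith only [h, sq_nonneg ‖istaT N M K f μ c (g n) - g n‖]
    exact (mul_le_mul_iff_right₀ hc2).mp h2
  have hPhi_anti : Antitone fun n => istaPhi N M K f μ (g n) :=
    antitone_nat_of_succ_le hmono
  have hPhiBdd : BddBelow (Set.range fun n => istaPhi N M K f μ (g n)) :=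
    ⟨0, by rintro y ⟨n, rfl⟩; exact hPhi_nonneg _⟩
  have hPhiTend : Filter.Tendsto (fun n => istaPhi N M K f μ (g n)) Filter.atTop
      (nhds (⨅ n, istaPhi N M K f μ (g n))) := tendsto_atTop_ciInf hPhi_anti hPhiBdd
  have hdsq : ∀ n, ‖g (n+1) - g n‖ ^ 2
      ≤ c ^ 2 * istaPhi N M K f μ (g n) - c ^ 2 * istaPhi N M K f μ (g (n+1)) := by
    intro n
    have h := ista_descent K f μ c hμ hc hK (g n)
    rw [← hgT n] at h
    linarith only [h]
  have hdiff0 : Filter.Tendsto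
      (fun n => c ^ 2 * istaPhi N M K f μ (g n) - c ^ 2 * istaPhi N M K f μ (g (n+1)))
      Filter.atTop (nhds 0) := by
    have hA := hPhiTend.const_mul (c ^ 2)
    have hB := hA.comp (Filter.tendsto_add_atTop_nat 1)
    have := hA.sub hB
    simpa [Function.comp] using this
  have hd2 : Filter.Tendsto (fun n => ‖g (n+1) - g n‖ ^ 2) Filter.atTop (nhds 0) :=
    squeeze_zero (fun n => sq_nonneg _) hdsq hdiff0
  have hd0 : Filter.Tendsto (fun n => ‖g (n+1) - g n‖) Filter.atTop (nhds 0) := by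
    have h3 := hd2.sqrt
    rw [Real.sqrt_zero] at h3
    have heq : (fun n => Real.sqrt (‖g (n+1) - g n‖ ^ 2)) = fun n => ‖g (n+1) - g n‖ :=
      funext fun n => Real.sqrt_sq (norm_nonneg _)
    rwa [heq] at h3
  have hbound : ∀ n, g n ∈ Metric.closedBall (0 : EuclideanSpace ℝ (Fin N))
      (istaPhi N M K f μ (g 0) / μ) := by
    intro n
    rw [Metric.mem_closedBall, dist_zero_right, le_div_iff₀ hμ]
    have h1 : ‖g n‖ ≤ ∑ i, |g n i| := enorm_le_sum_abs _
    have h2 : μ * ∑ i, |g n i| ≤ istaPhi N M K f μ (g n) := by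
      simp only [istaPhi]
      linarith only [sq_nonneg ‖K (g n) - f‖]
    have h3 : istaPhi N M K f μ (g n) ≤ istaPhi N M K f μ (g 0) := hPhi_anti (Nat.zero_le n)
    nlinarith only [mul_le_mul_of_nonneg_left h1 hμ.le, h2, h3]
  obtain ⟨glim, -, φ, hφmono, hφtend⟩ :=
    tendsto_subseq_of_bounded Metric.isBounded_closedBall hbound
  have hTcont := ista_continuous K f μ c hμ hc
  have hTg : Filter.Tendsto (fun k => istaT N M K f μ c (g (φ k))) Filter.atTop
      (nhds (istaT N M K f μ c glim)) := (hTcont.tendsto glim).comp hφtend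
  have hshift : Filter.Tendsto (fun k => g (φ k + 1)) Filter.atTop (nhds glim) := by
    have h1 : Filter.Tendsto (fun k => g (φ k + 1) - g (φ k)) Filter.atTop (nhds 0) := by
      rw [tendsto_zero_iff_norm_tendsto_zero]
      exact hd0.comp hφmono.tendsto_atTop
    have h2 := h1.add hφtend
    simpa using h2
  have hfix : istaT N M K f μ c glim = glim := by
    have heq : (fun k => g (φ k + 1)) = fun k => istaT N M K f μ c (g (φ k)) :=
      funext fun k => hgT (φ k)
    rw [heq] at hshift
    exact tendsto_nhds_unique hTg hshift
  have hne : ∀ n, ‖g (n+1) - glim‖ ≤ ‖g n - glim‖ := by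
    intro n
    calc ‖g (n+1) - glim‖ = ‖istaT N M K f μ c (g n) - istaT N M K f μ c glim‖ := by
          rw [hgT n, hfix]
      _ ≤ ‖g n - glim‖ := ista_nonexpansive K f μ c hc hK hμ.le (g n) glim
  have hr_anti : Antitone fun n => ‖g n - glim‖ := antitone_nat_of_succ_le hne
  have hr_bdd : BddBelow (Set.range fun n => ‖g n - glim‖) :=
    ⟨0, by rintro y ⟨n, rfl⟩; exact norm_nonneg _⟩
  have hr_tend := tendsto_atTop_ciInf hr_anti hr_bdd
  have hr_sub : Filter.Tendsto (fun k => ‖g (φ k) - glim‖) Filter.atTop (nhds 0) := by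
    have h1 : Filter.Tendsto (fun k => g (φ k) - glim) Filter.atTop (nhds 0) := by
      have h2 := hφtend.sub (tendsto_const_nhds (x := glim))
      simpa using h2
    simpa using h1.norm
  have h0 : (⨅ n, ‖g n - glim‖) = 0 :=
    tendsto_nhds_unique (hr_tend.comp hφmono.tendsto_atTop) hr_sub
  rw [h0] at hr_tend
  have hconv : Filter.Tendsto g Filter.atTop (nhds glim) := by
    rw [← tendsto_sub_nhds_zero_iff, tendsto_zero_iff_norm_tendsto_zero]
    exact hr_tend
  exact ⟨glim, hconv, fun h => ista_fixed_min K f μ c hμ hc glim hfix h⟩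
end

section
/- Let K : ℝ^N → ℝ^M be a linear map, let S ⊆ {1,…,M} be a set of indices (the locations where data is measured), let χ_S : ℝ^M → ℝ^M denote the coordinate projection (χ_S v)_j = v_j for j ∈ S and 0 otherwise, let f ∈ ℝ^M satisfy f_j = 0 for j ∉ S, let μ > 0, and let c > 0 with c‖K‖ < 1. Then for any initial guess g⁰ ∈ ℝ^N, the iterates gⁿ = 𝐒_{c²μ}(g^{n−1} + c² K^T (f − χ_S K g^{n−1})), n = 1, 2, …, where 𝐒_λ is componentwise soft-thresholding with parameter λ, converge to a minimizer of the functional g ↦ Σ_{j∈S} ((K g)_j − f_j)² + μ‖g‖₁. -/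
open Real

lemma st_mono_lip {μ : ℝ} (hμ : 0 ≤ μ) {u v : ℝ} (h : v ≤ u) :
    softThreshold μ v ≤ softThreshold μ u ∧
    softThreshold μ u - softThreshold μ v ≤ u - v := by
  unfold softThreshold
  split_ifs <;> constructor <;> linarith

lemma st_firm {μ : ℝ} (hμ : 0 ≤ μ) (u v : ℝ) :
    (softThreshold μ u - softThreshold μ v) ^ 2
      ≤ (softThreshold μ u - softThreshold μ v) * (u - v) := by
  rcases le_total v u with h | h
  · obtain ⟨h1, h2⟩ := st_mono_lip hμ h
    nlinarith
  · obtain ⟨h1, h2⟩ := st_mono_lip hμ h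
    nlinarith

lemma st_lipschitz {μ : ℝ} (hμ : 0 ≤ μ) : LipschitzWith 1 (softThreshold μ) := by
  apply LipschitzWith.of_dist_le_mul
  intro u v
  rw [Real.dist_eq, Real.dist_eq, NNReal.coe_one, one_mul]
  rcases le_total v u with h | h
  · obtain ⟨h1, h2⟩ := st_mono_lip hμ h
    rw [abs_of_nonneg (by linarith), abs_of_nonneg (by linarith)]; linarith
  · obtain ⟨h1, h2⟩ := st_mono_lip hμ h
    rw [abs_of_nonpos (by linarith), abs_of_nonpos (by linarith)]; linarith

lemma st_fixed_of {μ t d x : ℝ} (hμ : 0 < μ) (ht : 0 < t)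
    (h1 : |2 * d| ≤ μ) (h2 : 2 * d * x = μ * |x|) :
    softThreshold (t * μ) (x + t * d) = x := by
  rcases lt_trichotomy x 0 with hx | hx | hx
  · rw [abs_of_neg hx] at h2
    have hd : d = -(μ / 2) := by nlinarith
    subst hd
    unfold softThreshold
    split_ifs <;> nlinarith
  · subst hx
    rw [abs_zero] at h2
    rw [abs_le] at h1
    unfold softThreshold
    split_ifs with h h' <;> nlinarith
  · rw [abs_of_pos hx] at h2
    have hd : d = μ / 2 := by nlinarith
    subst hd
    unfold softThreshold
    split_ifs <;> nlinarith

lemma st_fixed_to {μ t d x : ℝ} (hμ : 0 < μ) (ht : 0 < t)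
    (h : softThreshold (t * μ) (x + t * d) = x) :
    |2 * d| ≤ μ ∧ 2 * d * x = μ * |x| := by
  unfold softThreshold at h
  split_ifs at h with h1 h2
  · -- x + t*d + t*μ/2 = x, so d = -μ/2, and x ≤ 0
    have hd : d = -(μ / 2) := by nlinarith
    have hx : x ≤ 0 := by nlinarith
    rw [abs_of_nonpos hx, hd]
    constructor
    · rw [abs_of_nonpos (by linarith)]; linarith
    · ring
  · -- x = 0, |t*d| < t*μ/2
    have hx : x = 0 := h.symm
    subst hx
    push_neg at h1
    constructor
    · rw [abs_le]
      constructor <;> nlinarith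
    · simp
  · -- x = x + t*d - t*μ/2 so d = μ/2, and x ≥ 0
    push_neg at h1 h2
    have hd : d = μ / 2 := by nlinarith
    have hx : 0 ≤ x := by nlinarith
    rw [abs_of_nonneg hx, hd]
    constructor
    · rw [abs_of_nonneg (by linarith)]; linarith
    · ring
lemma aux_small {a b r : ℝ} (ha : 0 ≤ a) (hr : 0 < r)
    (h : ∀ t : ℝ, |t| < r → b * t ≤ a * t ^ 2) : b = 0 := by
  by_contra hb
  set s : ℝ := min (r / 2) (|b| / (a + 1)) with hs
  have hbpos : 0 < |b| := abs_pos.mpr hb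
  have hspos : 0 < s := lt_min (by linarith) (by positivity)
  have hsr : s < r := lt_of_le_of_lt (min_le_left _ _) (by linarith)
  have hsb : s ≤ |b| / (a + 1) := min_le_right _ _
  set t : ℝ := Real.sign b * s with ht
  have habs : |t| = s := by
    rw [ht, abs_mul, abs_of_pos hspos]
    rcases Real.sign_apply_eq_of_ne_zero b hb with h' | h' <;> rw [h'] <;> norm_num
  have hbt : b * t = |b| * s := by
    rw [ht, ← mul_assoc]
    rcases lt_trichotomy b 0 with hbs | hbs | hbs
    · rw [Real.sign_of_neg hbs, abs_of_neg hbs]; ring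
    · exact absurd hbs hb
    · rw [Real.sign_of_pos hbs, abs_of_pos hbs]; ring
  have h0 := h t (habs ▸ hsr)
  rw [hbt] at h0
  have ht2 : t ^ 2 = s ^ 2 := by rw [← sq_abs, habs]
  rw [ht2] at h0
  -- |b| * s ≤ a * s^2, so |b| ≤ a * s ≤ a * |b|/(a+1) < |b|
  have h1 : |b| ≤ a * s := by
    have := mul_le_mul_of_nonneg_right h0 (le_of_lt (inv_pos.mpr hspos))
    calc |b| = |b| * s * s⁻¹ := by field_simp
    _ ≤ a * s ^ 2 * s⁻¹ := by
        apply mul_le_mul_of_nonneg_right h0 (le_of_lt (inv_pos.mpr hspos))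
    _ = a * s := by field_simp
  have h2 : a * s ≤ a * (|b| / (a + 1)) := by
    apply mul_le_mul_of_nonneg_left hsb ha
  have h3 : a * (|b| / (a + 1)) < |b| := by
    rw [mul_div_assoc', div_lt_iff₀ (by linarith : (0:ℝ) < a + 1)]
    nlinarith
  linarith

lemma aux_small2 {a b μ : ℝ} (ha : 0 ≤ a) (hμ : 0 ≤ μ)
    (h : ∀ t : ℝ, b * t - μ * |t| ≤ a * t ^ 2) : |b| ≤ μ := by
  by_contra hlt
  push_neg at hlt
  have hb : b ≠ 0 := by intro h0; rw [h0, abs_zero] at hlt; linarith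
  set s : ℝ := (|b| - μ) / (a + 1) with hs
  have hspos : 0 < s := div_pos (by linarith) (by linarith)
  set t : ℝ := Real.sign b * s with ht
  have habs : |t| = s := by
    rw [ht, abs_mul, abs_of_pos hspos]
    rcases Real.sign_apply_eq_of_ne_zero b hb with h' | h' <;> rw [h'] <;> norm_num
  have hbt : b * t = |b| * s := by
    rw [ht, ← mul_assoc]
    rcases lt_trichotomy b 0 with hbs | hbs | hbs
    · rw [Real.sign_of_neg hbs, abs_of_neg hbs]; ring
    · exact absurd hbs hb
    · rw [Real.sign_of_pos hbs, abs_of_pos hbs]; ring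
  have h0 := h t
  rw [hbt, habs] at h0
  have ht2 : t ^ 2 = s ^ 2 := by rw [← sq_abs, habs]
  rw [ht2] at h0
  -- (|b| - μ) * s ≤ a * s^2 ⇒ |b| - μ ≤ a * s = a(|b|-μ)/(a+1) < |b|-μ
  have h1 : |b| - μ ≤ a * s := by
    have := mul_le_mul_of_nonneg_right h0 (le_of_lt (inv_pos.mpr hspos))
    calc |b| - μ = (|b| - μ) * s * s⁻¹ := by field_simp
    _ ≤ a * s ^ 2 * s⁻¹ := by
        apply mul_le_mul_of_nonneg_right (by nlinarith) (le_of_lt (inv_pos.mpr hspos))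
    _ = a * s := by field_simp
  have h2 : a * s < (a + 1) * s := by nlinarith
  have h3 : (a + 1) * s = |b| - μ := by
    rw [hs]; field_simp
  linarith

lemma quad_min {a d x μ : ℝ} (ha : 0 ≤ a) (hμ : 0 < μ)
    (h : ∀ t : ℝ, 0 ≤ a * t ^ 2 - 2 * d * t + μ * (|x + t| - |x|)) :
    |2 * d| ≤ μ ∧ 2 * d * x = μ * |x| := by
  rcases lt_trichotomy x 0 with hx | hx | hx
  · have key : 2 * d + μ = 0 := by
      apply aux_small ha (show (0:ℝ) < -x by linarith)
      intro t htx
      have h1 : |x + t| = -(x + t) := by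
        rw [abs_of_neg]
        have := abs_lt.mp htx
        linarith [this.2]
      have h0 := h t
      rw [h1, abs_of_neg hx] at h0
      nlinarith
    rw [abs_of_neg hx]
    constructor
    · rw [abs_of_nonpos (by linarith)]; linarith
    · nlinarith
  · subst hx
    rw [abs_zero]
    refine ⟨aux_small2 ha (le_of_lt hμ) ?_, by ring⟩
    intro t
    have h0 := h t
    simp only [zero_add, abs_zero, sub_zero] at h0
    linarith
  · have key : 2 * d - μ = 0 := by
      apply aux_small ha hx
      intro t htx
      have h1 : |x + t| = x + t := by
        rw [abs_of_pos]
        have := abs_lt.mp htx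
        linarith [this.1]
      have h0 := h t
      rw [h1, abs_of_pos hx] at h0
      nlinarith
    rw [abs_of_pos hx]
    constructor
    · rw [abs_of_nonneg (by linarith)]; linarith
    · nlinarith

section Vec
open RealInnerProductSpace

variable {N M : ℕ}

noncomputable def chiS (S : Finset (Fin M)) (v : EuclideanSpace ℝ (Fin M)) :
    EuclideanSpace ℝ (Fin M) := WithLp.toLp 2 fun j => if j ∈ S then v j else 0

lemma chiS_sub (S : Finset (Fin M)) (a b : EuclideanSpace ℝ (Fin M)) :
    chiS S (a - b) = chiS S a - chiS S b := by
  ext j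
  simp only [chiS, PiLp.sub_apply, PiLp.toLp_apply]
  split_ifs <;> simp

lemma chiS_add (S : Finset (Fin M)) (a b : EuclideanSpace ℝ (Fin M)) :
    chiS S (a + b) = chiS S a + chiS S b := by
  ext j
  simp only [chiS, PiLp.add_apply, PiLp.toLp_apply]
  split_ifs <;> simp

lemma inner_chiS_right (S : Finset (Fin M)) (a b : EuclideanSpace ℝ (Fin M)) :
    ⟪a, chiS S b⟫ = ∑ j ∈ S, a j * b j := by
  rw [PiLp.inner_apply]
  simp only [RCLike.inner_apply, conj_trivial, chiS, mul_ite, mul_zero]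
  rw [← Fintype.sum_ite_mem S fun j => a j * b j]
  exact Finset.sum_congr rfl fun j _ => by split_ifs <;> ring

lemma inner_chiS_left (S : Finset (Fin M)) (a b : EuclideanSpace ℝ (Fin M)) :
    ⟪chiS S a, b⟫ = ∑ j ∈ S, a j * b j := by
  rw [real_inner_comm, inner_chiS_right]
  exact Finset.sum_congr rfl fun j _ => mul_comm _ _

lemma inner_chiS_chiS (S : Finset (Fin M)) (a b : EuclideanSpace ℝ (Fin M)) :
    ⟪chiS S a, chiS S b⟫ = ⟪a, chiS S b⟫ := by
  rw [inner_chiS_left S a (chiS S b), inner_chiS_right S a b]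
  refine Finset.sum_congr rfl fun j hj => ?_
  simp [chiS, hj]

lemma norm_chiS_le (S : Finset (Fin M)) (v : EuclideanSpace ℝ (Fin M)) :
    ‖chiS S v‖ ≤ ‖v‖ := by
  rw [EuclideanSpace.norm_eq, EuclideanSpace.norm_eq]
  apply Real.sqrt_le_sqrt
  apply Finset.sum_le_sum
  intro j _
  simp only [chiS]
  split_ifs
  · exact le_rfl
  · norm_num
    positivity

noncomputable def Wmap (K : EuclideanSpace ℝ (Fin N) →L[ℝ] EuclideanSpace ℝ (Fin M))
    (S : Finset (Fin M)) (f : EuclideanSpace ℝ (Fin M)) (c : ℝ)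
    (x : EuclideanSpace ℝ (Fin N)) : EuclideanSpace ℝ (Fin N) :=
  x + c ^ 2 • (ContinuousLinearMap.adjoint K) (f - chiS S (K x))

noncomputable def Tmap (K : EuclideanSpace ℝ (Fin N) →L[ℝ] EuclideanSpace ℝ (Fin M))
    (S : Finset (Fin M)) (f : EuclideanSpace ℝ (Fin M)) (μ c : ℝ)
    (x : EuclideanSpace ℝ (Fin N)) : EuclideanSpace ℝ (Fin N) :=
  WithLp.toLp 2 fun i => softThreshold (c ^ 2 * μ) (Wmap K S f c x i)

lemma Wmap_sub (K : EuclideanSpace ℝ (Fin N) →L[ℝ] EuclideanSpace ℝ (Fin M))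
    (S : Finset (Fin M)) (f : EuclideanSpace ℝ (Fin M)) (c : ℝ)
    (x y : EuclideanSpace ℝ (Fin N)) :
    Wmap K S f c x - Wmap K S f c y
      = (x - y) - c ^ 2 • (ContinuousLinearMap.adjoint K) (chiS S (K (x - y))) := by
  unfold Wmap
  rw [map_sub K, chiS_sub]
  have h2 : (f - chiS S (K x)) - (f - chiS S (K y)) = -(chiS S (K x) - chiS S (K y)) := by
    abel
  have h3 : c ^ 2 • (ContinuousLinearMap.adjoint K) (f - chiS S (K x))
        - c ^ 2 • (ContinuousLinearMap.adjoint K) (f - chiS S (K y))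
      = -(c ^ 2 • (ContinuousLinearMap.adjoint K) (chiS S (K x) - chiS S (K y))) := by
    rw [← smul_sub, ← map_sub, h2, map_neg, smul_neg]
  calc x + c ^ 2 • (ContinuousLinearMap.adjoint K) (f - chiS S (K x)) -
      (y + c ^ 2 • (ContinuousLinearMap.adjoint K) (f - chiS S (K y)))
      = x - y + (c ^ 2 • (ContinuousLinearMap.adjoint K) (f - chiS S (K x))
        - c ^ 2 • (ContinuousLinearMap.adjoint K) (f - chiS S (K y))) := by abel
    _ = _ := by rw [h3]; abel

lemma firm_vec (K : EuclideanSpace ℝ (Fin N) →L[ℝ] EuclideanSpace ℝ (Fin M))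
    (S : Finset (Fin M)) (f : EuclideanSpace ℝ (Fin M)) {μ c : ℝ}
    (hμ : 0 ≤ c ^ 2 * μ) (x y : EuclideanSpace ℝ (Fin N)) :
    ‖Tmap K S f μ c x - Tmap K S f μ c y‖ ^ 2
      ≤ ⟪Tmap K S f μ c x - Tmap K S f μ c y, Wmap K S f c x - Wmap K S f c y⟫ := by
  rw [← real_inner_self_eq_norm_sq, PiLp.inner_apply, PiLp.inner_apply]
  apply Finset.sum_le_sum
  intro i _
  simp only [RCLike.inner_apply, conj_trivial, PiLp.sub_apply, Tmap]
  have h := st_firm hμ (Wmap K S f c x i) (Wmap K S f c y i)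
  nlinarith [h]

set_option maxHeartbeats 1000000 in
lemma fejer (K : EuclideanSpace ℝ (Fin N) →L[ℝ] EuclideanSpace ℝ (Fin M))
    (S : Finset (Fin M)) (f : EuclideanSpace ℝ (Fin M)) {μ c : ℝ}
    (hμ : 0 ≤ c ^ 2 * μ) (x p : EuclideanSpace ℝ (Fin N))
    (hp : Tmap K S f μ c p = p) :
    ‖Tmap K S f μ c x - p‖ ^ 2
      ≤ ‖x - p‖ ^ 2 - (1 - c ^ 2 * ‖K‖ ^ 2) * ‖Tmap K S f μ c x - x‖ ^ 2 := by
  set x' := Tmap K S f μ c x with hx'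
  set e : EuclideanSpace ℝ (Fin N) := x - p with he
  set e' : EuclideanSpace ℝ (Fin N) := x' - p with he'
  set z : EuclideanSpace ℝ (Fin N) := x' - x with hz
  have h0 : ‖e'‖ ^ 2 ≤ ⟪e', Wmap K S f c x - Wmap K S f c p⟫ := by
    have := firm_vec K S f hμ x p
    rw [hp] at this
    exact this
  rw [Wmap_sub] at h0
  have h1 : ⟪e', e - c ^ 2 • (ContinuousLinearMap.adjoint K) (chiS S (K e))⟫
      = ⟪e', e⟫ - c ^ 2 * ⟪chiS S (K e'), chiS S (K e)⟫ := by
    rw [inner_sub_right, real_inner_smul_right, ContinuousLinearMap.adjoint_inner_right,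
      ← inner_chiS_chiS]
  rw [h1] at h0
  have hsplit : chiS S (K e') = chiS S (K e) + chiS S (K z) := by
    have : e' = e + z := by rw [he', he, hz]; abel
    rw [this, map_add, chiS_add]
  have h3 : ⟪chiS S (K e'), chiS S (K e)⟫
      = ‖chiS S (K e)‖ ^ 2 + ⟪chiS S (K z), chiS S (K e)⟫ := by
    rw [hsplit, inner_add_left, real_inner_self_eq_norm_sq]
  have h4 : -(‖chiS S (K z)‖ ^ 2 + ‖chiS S (K e)‖ ^ 2) ≤ 2 * ⟪chiS S (K z), chiS S (K e)⟫ := by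
    have := norm_add_sq_real (chiS S (K z)) (chiS S (K e))
    nlinarith [sq_nonneg ‖chiS S (K z) + chiS S (K e)‖]
  have h5 : ‖chiS S (K z)‖ ^ 2 ≤ ‖K‖ ^ 2 * ‖z‖ ^ 2 := by
    have l1 : ‖chiS S (K z)‖ ≤ ‖K‖ * ‖z‖ :=
      le_trans (norm_chiS_le S (K z)) (K.le_opNorm z)
    nlinarith [norm_nonneg (chiS S (K z))]
  have h6 : ‖z‖ ^ 2 = ‖e'‖ ^ 2 - 2 * ⟪e', e⟫ + ‖e‖ ^ 2 := by
    have : z = e' - e := by rw [he', he, hz]; abel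
    rw [this, norm_sub_sq_real]
  -- combine
  have hc2 : (0:ℝ) ≤ c ^ 2 := sq_nonneg c
  have hm1 : c ^ 2 * (-(‖chiS S (K z)‖ ^ 2 + ‖chiS S (K e)‖ ^ 2))
      ≤ c ^ 2 * (2 * ⟪chiS S (K z), chiS S (K e)⟫) :=
    mul_le_mul_of_nonneg_left h4 hc2
  have hm2 : c ^ 2 * ‖chiS S (K z)‖ ^ 2 ≤ c ^ 2 * (‖K‖ ^ 2 * ‖z‖ ^ 2) :=
    mul_le_mul_of_nonneg_left h5 hc2
  have hA : (0:ℝ) ≤ c ^ 2 * ‖chiS S (K e)‖ ^ 2 := by positivity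
  rw [h3] at h0
  have hTx : ‖x' - x‖ ^ 2 = ‖z‖ ^ 2 := by rw [hz]
  rw [hTx]
  nlinarith [h0, hm1, hm2, hA, h6]

noncomputable def Fobj (K : EuclideanSpace ℝ (Fin N) →L[ℝ] EuclideanSpace ℝ (Fin M))
    (S : Finset (Fin M)) (f : EuclideanSpace ℝ (Fin M)) (μ : ℝ)
    (h : EuclideanSpace ℝ (Fin N)) : ℝ :=
  (∑ j ∈ S, ((K h) j - f j) ^ 2) + μ * ∑ i, |h i|

lemma chiS_fixed (S : Finset (Fin M)) (f : EuclideanSpace ℝ (Fin M))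
    (hf : ∀ j : Fin M, j ∉ S → f j = 0) : chiS S f = f := by
  ext j
  simp only [chiS, PiLp.toLp_apply]
  split_ifs with h
  · rfl
  · exact (hf j h).symm

lemma d_coord (K : EuclideanSpace ℝ (Fin N) →L[ℝ] EuclideanSpace ℝ (Fin M))
    (S : Finset (Fin M)) (f : EuclideanSpace ℝ (Fin M))
    (hf : ∀ j : Fin M, j ∉ S → f j = 0) (q : EuclideanSpace ℝ (Fin N)) (i : Fin N) :
    (ContinuousLinearMap.adjoint K) (f - chiS S (K q)) i
      = ∑ j ∈ S, (f j - K q j) * K (EuclideanSpace.single i 1) j := by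
  have hs : f - chiS S (K q) = chiS S (f - K q) := by
    rw [chiS_sub, chiS_fixed S f hf]
  rw [hs]
  have h1 : (ContinuousLinearMap.adjoint K) (chiS S (f - K q)) i
      = ⟪EuclideanSpace.single i (1:ℝ), (ContinuousLinearMap.adjoint K) (chiS S (f - K q))⟫ := by
    rw [EuclideanSpace.inner_single_left]
    simp
  rw [h1, ContinuousLinearMap.adjoint_inner_right, real_inner_comm, inner_chiS_left]
  refine Finset.sum_congr rfl fun j hj => ?_
  rw [PiLp.sub_apply]

lemma expand_Fobj (K : EuclideanSpace ℝ (Fin N) →L[ℝ] EuclideanSpace ℝ (Fin M))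
    (S : Finset (Fin M)) (f : EuclideanSpace ℝ (Fin M))
    (hf : ∀ j : Fin M, j ∉ S → f j = 0) (μ : ℝ)
    (q : EuclideanSpace ℝ (Fin N)) (i : Fin N) (t : ℝ) :
    Fobj K S f μ (q + t • EuclideanSpace.single i 1)
      = Fobj K S f μ q
        + ((∑ j ∈ S, (K (EuclideanSpace.single i 1) j) ^ 2) * t ^ 2
          - 2 * ((ContinuousLinearMap.adjoint K) (f - chiS S (K q)) i) * t
          + μ * (|q i + t| - |q i|)) := by
  unfold Fobj
  have hKj : ∀ j, (K (q + t • EuclideanSpace.single i 1)) j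
      = K q j + t * K (EuclideanSpace.single i 1) j := by
    intro j
    rw [map_add, map_smul]
    simp [PiLp.add_apply, PiLp.smul_apply]
  -- quadratic part
  have hquad : ∑ j ∈ S, ((K (q + t • EuclideanSpace.single i 1)) j - f j) ^ 2
      = ∑ j ∈ S, ((K q) j - f j) ^ 2
        + ((∑ j ∈ S, (K (EuclideanSpace.single i 1) j) ^ 2) * t ^ 2
          - 2 * ((ContinuousLinearMap.adjoint K) (f - chiS S (K q)) i) * t) := by
    rw [d_coord K S f hf q i]
    have step : ∑ j ∈ S, ((K (q + t • EuclideanSpace.single i 1)) j - f j) ^ 2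
        = ∑ j ∈ S, (((K q) j - f j) ^ 2
            + ((K (EuclideanSpace.single i 1) j) ^ 2 * t ^ 2
              - 2 * ((f j - K q j) * K (EuclideanSpace.single i 1) j) * t)) := by
      refine Finset.sum_congr rfl fun j hj => ?_
      rw [hKj j]
      ring
    rw [step, Finset.sum_add_distrib]
    congr 1
    rw [Finset.sum_sub_distrib, ← Finset.sum_mul, ← Finset.sum_mul, ← Finset.mul_sum]
  -- l1 part
  have hl1 : ∑ i', |(q + t • EuclideanSpace.single i 1 : EuclideanSpace ℝ (Fin N)) i'|
      = (∑ i', |q i'|) + (|q i + t| - |q i|) := by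
    have happ : ∀ i', (q + t • EuclideanSpace.single i 1 : EuclideanSpace ℝ (Fin N)) i'
        = q i' + t * (if i' = i then 1 else 0) := by
      intro i'
      simp [PiLp.add_apply, PiLp.smul_apply, EuclideanSpace.single_apply]
    have e1 : ∑ i', |(q + t • EuclideanSpace.single i 1 : EuclideanSpace ℝ (Fin N)) i'|
        = ∑ i' ∈ Finset.univ.erase i, |q i'| + |q i + t| := by
      rw [← Finset.sum_erase_add _ _ (Finset.mem_univ i)]
      congr 1
      · refine Finset.sum_congr rfl fun i' hi' => ?_
        rw [happ i', if_neg (Finset.mem_erase.mp hi').1, mul_zero, add_zero]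
      · rw [happ i, if_pos rfl, mul_one]
    have e2 : ∑ i', |q i'| = ∑ i' ∈ Finset.univ.erase i, |q i'| + |q i| := by
      rw [← Finset.sum_erase_add _ _ (Finset.mem_univ i)]
    rw [e1, e2]
    ring
  rw [hquad, hl1]
  ring

lemma cond_min (K : EuclideanSpace ℝ (Fin N) →L[ℝ] EuclideanSpace ℝ (Fin M))
    (S : Finset (Fin M)) (f : EuclideanSpace ℝ (Fin M))
    (hf : ∀ j : Fin M, j ∉ S → f j = 0) (μ : ℝ)
    (q : EuclideanSpace ℝ (Fin N))
    (hcond : ∀ i, |2 * (ContinuousLinearMap.adjoint K) (f - chiS S (K q)) i| ≤ μ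
      ∧ 2 * (ContinuousLinearMap.adjoint K) (f - chiS S (K q)) i * q i = μ * |q i|)
    (h : EuclideanSpace ℝ (Fin N)) : Fobj K S f μ q ≤ Fobj K S f μ h := by
  set d : EuclideanSpace ℝ (Fin N) := (ContinuousLinearMap.adjoint K) (f - chiS S (K q)) with hd
  -- inner products
  have hinner : ⟪d, h - q⟫ = ∑ j ∈ S, (f j - K q j) * (K h j - K q j) := by
    rw [hd]
    have hs : f - chiS S (K q) = chiS S (f - K q) := by
      rw [chiS_sub, chiS_fixed S f hf]
    rw [hs, ContinuousLinearMap.adjoint_inner_left, inner_chiS_left]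
    refine Finset.sum_congr rfl fun j hj => ?_
    rw [map_sub, PiLp.sub_apply, PiLp.sub_apply]
  have hinner2 : ⟪d, h - q⟫ = ∑ i, d i * (h i - q i) := by
    rw [PiLp.inner_apply]
    refine Finset.sum_congr rfl fun i _ => ?_
    simp [RCLike.inner_apply, PiLp.sub_apply]; ring
  -- quadratic part
  have hquad : ∑ j ∈ S, ((K q) j - f j) ^ 2 - 2 * ⟪d, h - q⟫ ≤ ∑ j ∈ S, ((K h) j - f j) ^ 2 := by
    rw [hinner]
    have key : ∀ j ∈ S, ((K q) j - f j) ^ 2 - 2 * ((f j - K q j) * (K h j - K q j))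
        ≤ ((K h) j - f j) ^ 2 := by
      intro j _
      nlinarith [sq_nonneg (K h j - K q j)]
    calc ∑ j ∈ S, ((K q) j - f j) ^ 2 - 2 * ∑ j ∈ S, (f j - K q j) * (K h j - K q j)
        = ∑ j ∈ S, (((K q) j - f j) ^ 2 - 2 * ((f j - K q j) * (K h j - K q j))) := by
          rw [Finset.sum_sub_distrib, ← Finset.mul_sum]
      _ ≤ _ := Finset.sum_le_sum key
  -- l1 part
  have hl1 : μ * ∑ i, |q i| + 2 * ⟪d, h - q⟫ ≤ μ * ∑ i, |h i| := by
    rw [hinner2]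
    have key : ∀ i : Fin N, μ * |q i| + 2 * (d i * (h i - q i)) ≤ μ * |h i| := by
      intro i
      obtain ⟨h1, h2⟩ := hcond i
      have h3 : 2 * d i * h i ≤ μ * |h i| := by
        calc 2 * d i * h i ≤ |2 * d i * h i| := le_abs_self _
          _ = |2 * d i| * |h i| := abs_mul _ _
          _ ≤ μ * |h i| := mul_le_mul_of_nonneg_right h1 (abs_nonneg _)
      nlinarith [h2]
    calc μ * ∑ i, |q i| + 2 * ∑ i, d i * (h i - q i)
        = ∑ i, (μ * |q i| + 2 * (d i * (h i - q i))) := by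
          rw [Finset.sum_add_distrib, ← Finset.mul_sum, ← Finset.mul_sum]
      _ ≤ ∑ i, μ * |h i| := Finset.sum_le_sum fun i _ => key i
      _ = μ * ∑ i, |h i| := (Finset.mul_sum _ _ _).symm
  unfold Fobj
  linarith

lemma l1_ge_norm (v : EuclideanSpace ℝ (Fin N)) : ‖v‖ ≤ ∑ i, |v i| := by
  rw [EuclideanSpace.norm_eq]
  have h1 : ∑ i, ‖v i‖ ^ 2 ≤ (∑ i, |v i|) ^ 2 := by
    have := Finset.sum_sq_le_sq_sum_of_nonneg
      (f := fun i => |v i|) (s := Finset.univ) (fun i _ => abs_nonneg (v i))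
    simpa [Real.norm_eq_abs] using this
  calc Real.sqrt (∑ i, ‖v i‖ ^ 2) ≤ Real.sqrt ((∑ i, |v i|) ^ 2) := Real.sqrt_le_sqrt h1
    _ = ∑ i, |v i| := Real.sqrt_sq (Finset.sum_nonneg fun i _ => abs_nonneg _)

lemma Fobj_continuous (K : EuclideanSpace ℝ (Fin N) →L[ℝ] EuclideanSpace ℝ (Fin M))
    (S : Finset (Fin M)) (f : EuclideanSpace ℝ (Fin M)) (μ : ℝ) :
    Continuous (Fobj K S f μ) := by
  unfold Fobj
  apply Continuous.add
  · apply continuous_finset_sum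
    intro j _
    exact ((((EuclideanSpace.proj j).continuous.comp K.continuous).sub continuous_const).pow 2)
  · apply Continuous.mul continuous_const
    apply continuous_finset_sum
    intro i _
    exact (EuclideanSpace.proj i).continuous.abs

lemma exists_min (K : EuclideanSpace ℝ (Fin N) →L[ℝ] EuclideanSpace ℝ (Fin M))
    (S : Finset (Fin M)) (f : EuclideanSpace ℝ (Fin M)) {μ : ℝ} (hμ : 0 < μ) :
    ∃ q : EuclideanSpace ℝ (Fin N), ∀ h, Fobj K S f μ q ≤ Fobj K S f μ h := by
  set R : ℝ := Fobj K S f μ 0 / μ + 1 with hR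
  have hF0 : 0 ≤ Fobj K S f μ 0 := by
    unfold Fobj
    have : (0:EuclideanSpace ℝ (Fin N)) = 0 := rfl
    apply add_nonneg
    · exact Finset.sum_nonneg fun j _ => sq_nonneg _
    · apply mul_nonneg (le_of_lt hμ)
      exact Finset.sum_nonneg fun i _ => abs_nonneg _
  have hRpos : 0 < R := by positivity
  obtain ⟨q, hqmem, hqmin⟩ := (isCompact_closedBall (0 : EuclideanSpace ℝ (Fin N)) R).exists_isMinOn
    ⟨0, Metric.mem_closedBall_self (le_of_lt hRpos)⟩
    (Fobj_continuous K S f μ).continuousOn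
  refine ⟨q, fun h => ?_⟩
  by_cases hh : h ∈ Metric.closedBall (0 : EuclideanSpace ℝ (Fin N)) R
  · exact hqmin hh
  · have hq0 : Fobj K S f μ q ≤ Fobj K S f μ 0 :=
      hqmin (Metric.mem_closedBall_self (le_of_lt hRpos))
    have hhn : R < ‖h‖ := by
      rw [Metric.mem_closedBall, dist_zero_right] at hh
      linarith [not_le.mp hh]
    have hlow : μ * ‖h‖ ≤ Fobj K S f μ h := by
      unfold Fobj
      have h1 := l1_ge_norm h
      have h2 : (0:ℝ) ≤ ∑ j ∈ S, ((K h) j - f j) ^ 2 :=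
        Finset.sum_nonneg fun j _ => sq_nonneg _
      nlinarith [h1, h2]
    have : Fobj K S f μ 0 = μ * (R - 1) := by
      rw [hR]
      field_simp; ring
    nlinarith

lemma min_cond (K : EuclideanSpace ℝ (Fin N) →L[ℝ] EuclideanSpace ℝ (Fin M))
    (S : Finset (Fin M)) (f : EuclideanSpace ℝ (Fin M))
    (hf : ∀ j : Fin M, j ∉ S → f j = 0) {μ : ℝ} (hμ : 0 < μ)
    (q : EuclideanSpace ℝ (Fin N)) (hmin : ∀ h, Fobj K S f μ q ≤ Fobj K S f μ h) :
    ∀ i, |2 * (ContinuousLinearMap.adjoint K) (f - chiS S (K q)) i| ≤ μ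
      ∧ 2 * (ContinuousLinearMap.adjoint K) (f - chiS S (K q)) i * q i = μ * |q i| := by
  intro i
  apply quad_min (a := ∑ j ∈ S, (K (EuclideanSpace.single i 1) j) ^ 2)
    (Finset.sum_nonneg fun j _ => sq_nonneg _) hμ
  intro t
  have h1 := hmin (q + t • EuclideanSpace.single i 1)
  rw [expand_Fobj K S f hf μ q i t] at h1
  linarith

lemma Wmap_apply (K : EuclideanSpace ℝ (Fin N) →L[ℝ] EuclideanSpace ℝ (Fin M))
    (S : Finset (Fin M)) (f : EuclideanSpace ℝ (Fin M)) (c : ℝ)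
    (x : EuclideanSpace ℝ (Fin N)) (i : Fin N) :
    Wmap K S f c x i = x i + c ^ 2 * ((ContinuousLinearMap.adjoint K) (f - chiS S (K x)) i) := by
  unfold Wmap
  rw [PiLp.add_apply, PiLp.smul_apply, smul_eq_mul]

lemma cond_fixed (K : EuclideanSpace ℝ (Fin N) →L[ℝ] EuclideanSpace ℝ (Fin M))
    (S : Finset (Fin M)) (f : EuclideanSpace ℝ (Fin M)) {μ c : ℝ}
    (hμ : 0 < μ) (hc : 0 < c) (q : EuclideanSpace ℝ (Fin N))
    (hcond : ∀ i, |2 * (ContinuousLinearMap.adjoint K) (f - chiS S (K q)) i| ≤ μ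
      ∧ 2 * (ContinuousLinearMap.adjoint K) (f - chiS S (K q)) i * q i = μ * |q i|) :
    Tmap K S f μ c q = q := by
  ext i
  show softThreshold (c ^ 2 * μ) (Wmap K S f c q i) = q i
  rw [Wmap_apply]
  exact st_fixed_of hμ (by positivity) (hcond i).1 (hcond i).2

lemma fixed_cond (K : EuclideanSpace ℝ (Fin N) →L[ℝ] EuclideanSpace ℝ (Fin M))
    (S : Finset (Fin M)) (f : EuclideanSpace ℝ (Fin M)) {μ c : ℝ}
    (hμ : 0 < μ) (hc : 0 < c) (q : EuclideanSpace ℝ (Fin N))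
    (hq : Tmap K S f μ c q = q) :
    ∀ i, |2 * (ContinuousLinearMap.adjoint K) (f - chiS S (K q)) i| ≤ μ
      ∧ 2 * (ContinuousLinearMap.adjoint K) (f - chiS S (K q)) i * q i = μ * |q i| := by
  intro i
  apply st_fixed_to hμ (show (0:ℝ) < c ^ 2 by positivity)
  have h1 : Tmap K S f μ c q i = q i := by rw [hq]
  rw [show Tmap K S f μ c q i = softThreshold (c ^ 2 * μ) (Wmap K S f c q i) from rfl,
    Wmap_apply] at h1
  exact h1

lemma chiS_continuous (S : Finset (Fin M)) : Continuous (chiS S) := by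
  unfold chiS
  refine (PiLp.continuous_toLp 2 _).comp ?_
  apply continuous_pi
  intro j
  by_cases hj : j ∈ S
  · simp only [hj, if_true]
    exact (continuous_apply j).comp (PiLp.continuous_ofLp 2 _)
  · simp only [hj, if_false]
    exact continuous_const

lemma Tmap_continuous (K : EuclideanSpace ℝ (Fin N) →L[ℝ] EuclideanSpace ℝ (Fin M))
    (S : Finset (Fin M)) (f : EuclideanSpace ℝ (Fin M)) {μ c : ℝ} (hμ : 0 ≤ c ^ 2 * μ) :
    Continuous (Tmap K S f μ c) := by
  have hW : Continuous (Wmap K S f c) := by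
    unfold Wmap
    apply continuous_id.add
    apply Continuous.fun_const_smul
    exact (ContinuousLinearMap.adjoint K).continuous.comp
      (continuous_const.sub ((chiS_continuous S).comp K.continuous))
  unfold Tmap
  refine (PiLp.continuous_toLp 2 _).comp ?_
  apply continuous_pi
  intro i
  exact (st_lipschitz hμ).continuous.comp (((continuous_apply i).comp (PiLp.continuous_ofLp 2 _)).comp hW)

end Vec

open Filter Topology

/-- With missing data (measurements only on the index set `S`), the iterates
`gⁿ = 𝐒_{c²μ}(g^{n-1} + c² Kᵀ (f - χ_S K g^{n-1}))` converge to a minimizer of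
`g ↦ ∑_{j ∈ S} ((K g)_j - f_j)² + μ ‖g‖₁`. -/
theorem soft_thresholding_missing_data_converges (N M : ℕ)
    (K : EuclideanSpace ℝ (Fin N) →L[ℝ] EuclideanSpace ℝ (Fin M))
    (S : Finset (Fin M)) (f : EuclideanSpace ℝ (Fin M))
    (hf : ∀ j : Fin M, j ∉ S → f j = 0)
    (μ c : ℝ) (hμ : 0 < μ) (hc : 0 < c) (hK : c * ‖K‖ < 1)
    (g : ℕ → EuclideanSpace ℝ (Fin N))
    (hrec : ∀ n : ℕ, g (n + 1) = (show EuclideanSpace ℝ (Fin N) from WithLp.toLp 2 fun i =>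
      softThreshold (c ^ 2 * μ)
        ((g n + c ^ 2 • (ContinuousLinearMap.adjoint K)
          (f - (show EuclideanSpace ℝ (Fin M) from WithLp.toLp 2 fun j =>
            if j ∈ S then K (g n) j else 0))) i))) :
    ∃ glim : EuclideanSpace ℝ (Fin N),
      Filter.Tendsto g Filter.atTop (nhds glim) ∧
      ∀ h : EuclideanSpace ℝ (Fin N),
        (∑ j ∈ S, ((K glim) j - f j) ^ 2) + μ * ∑ i, |glim i|
          ≤ (∑ j ∈ S, ((K h) j - f j) ^ 2) + μ * ∑ i, |h i| := by
  have hlam : (0:ℝ) ≤ c ^ 2 * μ := by positivity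
  have hgrec : ∀ n, g (n + 1) = Tmap K S f μ c (g n) := hrec
  -- a fixed point exists (a global minimizer is a fixed point)
  obtain ⟨q0, hq0min⟩ := exists_min K S f hμ
  have hq0fix : Tmap K S f μ c q0 = q0 :=
    cond_fixed K S f hμ hc q0 (min_cond K S f hf hμ q0 hq0min)
  -- constants
  have hκ : c ^ 2 * ‖K‖ ^ 2 < 1 := by
    have h0 : 0 ≤ c * ‖K‖ := by positivity
    nlinarith
  have hδ : 0 < 1 - c ^ 2 * ‖K‖ ^ 2 := by linarith
  -- Fejér monotonicity with respect to any fixed point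
  have hfej : ∀ p : EuclideanSpace ℝ (Fin N), Tmap K S f μ c p = p → ∀ n,
      ‖g (n + 1) - p‖ ^ 2 ≤ ‖g n - p‖ ^ 2
        - (1 - c ^ 2 * ‖K‖ ^ 2) * ‖g (n + 1) - g n‖ ^ 2 := by
    intro p hp n
    have h1 := fejer K S f hlam (g n) p hp
    rw [← hgrec n] at h1
    exact h1
  have hanti : ∀ p : EuclideanSpace ℝ (Fin N), Tmap K S f μ c p = p →
      Antitone fun n => ‖g n - p‖ ^ 2 := by
    intro p hp
    apply antitone_nat_of_succ_le
    intro n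
    have h1 := hfej p hp n
    have h2 : 0 ≤ (1 - c ^ 2 * ‖K‖ ^ 2) * ‖g (n + 1) - g n‖ ^ 2 := by positivity
    linarith
  -- boundedness
  have hbound : ∀ n, g n ∈ Metric.closedBall q0 ‖g 0 - q0‖ := by
    intro n
    rw [Metric.mem_closedBall, dist_eq_norm]
    have h1 : ‖g n - q0‖ ^ 2 ≤ ‖g 0 - q0‖ ^ 2 := hanti q0 hq0fix (Nat.zero_le n)
    have h2 := Real.sqrt_le_sqrt h1
    rwa [Real.sqrt_sq (norm_nonneg _), Real.sqrt_sq (norm_nonneg _)] at h2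
  obtain ⟨q, _, φ, hφ, hgφ⟩ :=
    tendsto_subseq_of_bounded Metric.isBounded_closedBall hbound
  -- successive differences tend to zero
  obtain ⟨L, hL⟩ : ∃ L, Tendsto (fun n => ‖g n - q0‖ ^ 2) atTop (𝓝 L) :=
    ⟨_, tendsto_atTop_ciInf (hanti q0 hq0fix)
      ⟨0, by rintro x ⟨n, rfl⟩; positivity⟩⟩
  have hL1 : Tendsto (fun n => ‖g (n + 1) - q0‖ ^ 2) atTop (𝓝 L) :=
    hL.comp (tendsto_add_atTop_nat 1)
  have hdiff2 : Tendsto (fun n => (1 - c ^ 2 * ‖K‖ ^ 2) * ‖g (n + 1) - g n‖ ^ 2)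
      atTop (𝓝 0) := by
    have hub : Tendsto (fun n => ‖g n - q0‖ ^ 2 - ‖g (n + 1) - q0‖ ^ 2) atTop (𝓝 0) := by
      simpa using hL.sub hL1
    exact squeeze_zero (fun n => by positivity)
      (fun n => by have := hfej q0 hq0fix n; linarith) hub
  have hdiffsq : Tendsto (fun n => ‖g (n + 1) - g n‖ ^ 2) atTop (𝓝 0) := by
    have h2 := hdiff2.const_mul (1 - c ^ 2 * ‖K‖ ^ 2)⁻¹
    rw [mul_zero] at h2
    convert h2 using 2 with n
    field_simp
  have hdiffnorm : Tendsto (fun n => ‖g (n + 1) - g n‖) atTop (𝓝 0) := by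
    have h3 := (Real.continuous_sqrt.tendsto' 0 0 Real.sqrt_zero).comp hdiffsq
    convert h3 using 2 with n
    simp [Function.comp, Real.sqrt_sq (norm_nonneg _)]
  have hdiffvec : Tendsto (fun n => g (n + 1) - g n) atTop (𝓝 0) :=
    tendsto_zero_iff_norm_tendsto_zero.mpr hdiffnorm
  -- the cluster point q is a fixed point
  have h1 : Tendsto (fun k => g (φ k + 1)) atTop (𝓝 q) := by
    have heq : (fun k => g (φ k + 1))
        = fun k => (g ∘ φ) k + ((fun n => g (n + 1) - g n) ∘ φ) k := by
      funext k; simp [Function.comp]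
    rw [heq]
    have h2 := hgφ.add (hdiffvec.comp hφ.tendsto_atTop)
    simpa using h2
  have h2 : Tendsto (fun k => g (φ k + 1)) atTop (𝓝 (Tmap K S f μ c q)) := by
    have heq : (fun k => g (φ k + 1)) = (Tmap K S f μ c) ∘ (g ∘ φ) := by
      funext k; exact hgrec (φ k)
    rw [heq]
    exact ((Tmap_continuous K S f hlam).tendsto q).comp hgφ
  have hqfix : Tmap K S f μ c q = q := tendsto_nhds_unique h2 h1
  -- convergence of the full sequence to q
  have hbq0 : Tendsto (fun k => ‖g (φ k) - q‖ ^ 2) atTop (𝓝 0) := by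
    have h3 : Tendsto (fun k => ‖(g ∘ φ) k - q‖ ^ 2) atTop (𝓝 (‖q - q‖ ^ 2)) :=
      ((hgφ.sub tendsto_const_nhds).norm).pow 2
    simpa using h3
  have hconv2 : Tendsto (fun n => ‖g n - q‖ ^ 2) atTop (𝓝 0) := by
    rw [Metric.tendsto_atTop]
    intro ε hε
    obtain ⟨k0, hk0⟩ := Metric.tendsto_atTop.mp hbq0 ε hε
    refine ⟨φ k0, fun n hn => ?_⟩
    have h4 := hk0 k0 le_rfl
    rw [Real.dist_eq, sub_zero] at h4 ⊢
    have h5 : ‖g n - q‖ ^ 2 ≤ ‖g (φ k0) - q‖ ^ 2 := hanti q hqfix hn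
    rw [abs_of_nonneg (sq_nonneg _)] at h4 ⊢
    have h6 : (0:ℝ) ≤ ‖g n - q‖ ^ 2 := sq_nonneg _
    linarith
  have hconvnorm : Tendsto (fun n => ‖g n - q‖) atTop (𝓝 0) := by
    have h3 := (Real.continuous_sqrt.tendsto' 0 0 Real.sqrt_zero).comp hconv2
    convert h3 using 2 with n
    simp [Function.comp, Real.sqrt_sq (norm_nonneg _)]
  have hconv : Tendsto g atTop (𝓝 q) :=
    tendsto_iff_norm_sub_tendsto_zero.mpr hconvnorm
  -- q is a minimizer
  refine ⟨q, hconv, fun h => ?_⟩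
  exact cond_min K S f hf μ q (fixed_cond K S f hμ hc q hqfix) h
end
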